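/- Let Λ be a countably infinite set and S a finite commutative monoid; equip S^Λ with the product topology (S discrete) and its Borel σ-algebra. Let 𝕍 be a finite-dimensional real vector space, let v₁,…,vₙ ∈ 𝕍 be affinely independent, and let (f_k)_{k∈K} be a family of measurable functions f_k : S^Λ → 𝕍, each taking values in the set {v₁,…,vₙ}. Then the family (f_k)_{k∈K} is distribution determining if and only if it is weakly distribution determining. -/

import Mathlib

open Function MeasureTheory

/-- **Equality of notions.** For a family of measurable functions on `S^Λ` taking values in
an affinely independent finite set `{v 1, …, v n}` of a finite-dimensional real vector
space, being distribution determining is equivalent to being weakly distribution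
determining. -/
theorem distribution_determining_iff_weakly
    {Λ S : Type*} [Countable Λ] [Infinite Λ]
    [CommMonoid S] [Finite S]
    [TopologicalSpace S] [DiscreteTopology S]
    [MeasurableSpace (Λ → S)] [BorelSpace (Λ → S)]
    {V : Type*} [NormedAddCommGroup V] [NormedSpace ℝ V] [FiniteDimensional ℝ V]
    [MeasurableSpace V] [BorelSpace V]
    {K : Type*} (f : K → (Λ → S) → V)
    (hmeas : ∀ k, Measurable (f k))
    {n : ℕ} (v : Fin n → V)
    (hv : AffineIndependent ℝ v)
    (hrange : ∀ (k : K) (x : Λ → S), f k x ∈ Set.range v) :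
    ((∀ μ μ' : Measure (Λ → S), IsProbabilityMeasure μ → IsProbabilityMeasure μ' →
        (∀ k, ∫ x, f k x ∂μ = ∫ x, f k x ∂μ') → μ = μ') ↔
      (∀ μ μ' : Measure (Λ → S), IsProbabilityMeasure μ → IsProbabilityMeasure μ' →
        (∀ k, μ.map (f k) = μ'.map (f k)) → μ = μ')) := by
  constructor
  · intro hdet μ μ' hμ hμ' hmap
    refine hdet μ μ' hμ hμ' fun k => ?_
    have h1 : ∫ x, f k x ∂μ = ∫ y, y ∂(μ.map (f k)) :=
      (integral_map (hmeas k).aemeasurable aestronglyMeasurable_id).symm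
    have h2 : ∫ x, f k x ∂μ' = ∫ y, y ∂(μ'.map (f k)) :=
      (integral_map (hmeas k).aemeasurable aestronglyMeasurable_id).symm
    rw [h1, h2, hmap k]
  · intro hweak μ μ' hμ hμ' hint
    refine hweak μ μ' hμ hμ' fun k => ?_
    obtain ⟨i0, -⟩ := hrange k (fun _ => 1)
    haveI : Nonempty (Fin n) := ⟨i0⟩
    have hvinj : Function.Injective v := hv.injective
    set h : (Λ → S) → Fin n := fun x => Function.invFun v (f k x) with hh
    have hcomp : ∀ x, v (h x) = f k x := by
      intro x
      obtain ⟨i, hi⟩ := hrange k x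
      rw [hh]
      simp only
      rw [← hi, Function.leftInverse_invFun hvinj]
    have hhmeas : Measurable h := by
      apply measurable_to_countable'
      intro i
      have hpre : h ⁻¹' {i} = f k ⁻¹' {v i} := by
        ext x
        simp only [Set.mem_preimage, Set.mem_singleton_iff]
        constructor
        · intro hx; rw [← hcomp x, hx]
        · intro hx
          have h2 := hcomp x
          rw [hx] at h2
          exact hvinj h2
      rw [hpre]
      exact (hmeas k) (measurableSet_singleton _)
    have hvmeas : Measurable v := measurable_of_countable v
    have hmapdecomp : ∀ ν : Measure (Λ → S), ν.map (f k) = (ν.map h).map v := by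
      intro ν
      rw [Measure.map_map hvmeas hhmeas]
      congr 1
      funext x
      exact (hcomp x).symm
    have key : ∀ ν : Measure (Λ → S), IsProbabilityMeasure ν →
        ∫ x, f k x ∂ν = ∑ i, ((ν.map h) {i}).toReal • v i := by
      intro ν hν
      haveI : IsProbabilityMeasure (ν.map h) := Measure.isProbabilityMeasure_map hhmeas.aemeasurable
      have e1 : ∫ x, f k x ∂ν = ∫ i, v i ∂(ν.map h) := by
        rw [integral_map hhmeas.aemeasurable hvmeas.aestronglyMeasurable]
        exact integral_congr_ae (Filter.Eventually.of_forall fun x => (hcomp x).symm)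
      rw [e1]
      exact integral_fintype Integrable.of_finite
    have hsum : ∀ ν : Measure (Λ → S), IsProbabilityMeasure ν →
        ∑ i, ((ν.map h) {i}).toReal = 1 := by
      intro ν hν
      haveI : IsProbabilityMeasure (ν.map h) := Measure.isProbabilityMeasure_map hhmeas.aemeasurable
      rw [← ENNReal.toReal_sum (fun i _ => measure_ne_top _ _)]
      have huniv : ∑ i : Fin n, (ν.map h) {i} = (ν.map h) Set.univ := by
        rw [← measure_biUnion_finset
          (fun i _ j _ hij => Set.disjoint_singleton.mpr hij)
          (fun i _ => measurableSet_singleton i)]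
        congr 1
        simp [Set.eq_univ_iff_forall]
      rw [huniv, measure_univ, ENNReal.toReal_one]
    have hw : ∀ i, ((μ.map h) {i}).toReal = ((μ'.map h) {i}).toReal := by
      have hwv : ∑ i, (((μ.map h) {i}).toReal - ((μ'.map h) {i}).toReal) • v i = 0 := by
        simp only [sub_smul, Finset.sum_sub_distrib]
        rw [← key μ hμ, ← key μ' hμ', hint k, sub_self]
      have hws : ∑ i, (((μ.map h) {i}).toReal - ((μ'.map h) {i}).toReal) = 0 := by
        rw [Finset.sum_sub_distrib, hsum μ hμ, hsum μ' hμ', sub_self]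
      intro i
      have := affineIndependent_iff.mp hv Finset.univ
        (fun i => ((μ.map h) {i}).toReal - ((μ'.map h) {i}).toReal) hws hwv i
        (Finset.mem_univ i)
      simpa [sub_eq_zero] using this
    have hmaph : μ.map h = μ'.map h := by
      haveI : IsProbabilityMeasure (μ.map h) := Measure.isProbabilityMeasure_map hhmeas.aemeasurable
      haveI : IsProbabilityMeasure (μ'.map h) := Measure.isProbabilityMeasure_map hhmeas.aemeasurable
      refine Measure.ext_of_singleton fun i => ?_
      exact (ENNReal.toReal_eq_toReal_iff' (measure_ne_top _ _) (measure_ne_top _ _)).mp (hw i)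
    rw [hmapdecomp μ, hmapdecomp μ', hmaph]
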